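/- The weighted nuclear norm with nonincreasing weights is computed by soft-thresholding singular values: let X ∈ ℝ^{m×n} with SVD X = U Σ Vᵀ, singular values σ₁ ≥ … ≥ σ_r, and weights 0 ≤ w₁ ≤ … ≤ w_r. Then X̂ = U S_w(Σ) Vᵀ, where S_w(Σ) has diagonal entries max(σ_i − w_i, 0), is a global minimizer of Y ↦ (1/2)‖X − Y‖_F² + ∑_i w_i σ_i(Y). -/

import Mathlib

open Matrix

/-- Squared Frobenius norm of a real matrix. -/
def fnormSq {m n : ℕ} (M : Matrix (Fin m) (Fin n) ℝ) : ℝ :=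
  ∑ i, ∑ j, (M i j) ^ 2

/-- The `i`-th largest singular value of a real `m×n` matrix, obtained by sorting
the square roots of the eigenvalues of `YᵀY` in nonincreasing order. -/
noncomputable def svalDesc {m n : ℕ} (Y : Matrix (Fin m) (Fin n) ℝ) (i : Fin n) : ℝ :=
  let f : Fin n → ℝ :=
    fun j => Real.sqrt ((Matrix.isHermitian_conjTranspose_mul_self Y).eigenvalues j)
  f (Tuple.sort f i.rev)

lemma trace_transpose_mul' {m n : ℕ} (X Y : Matrix (Fin m) (Fin n) ℝ) :
    trace (Xᵀ * Y) = ∑ i, ∑ j, X i j * Y i j := by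
  rw [Finset.sum_comm]
  simp [trace, Matrix.mul_apply, Matrix.diag]

lemma fnormSq_expand {m n : ℕ} (X Y : Matrix (Fin m) (Fin n) ℝ) :
    fnormSq (X - Y) = fnormSq X - 2 * trace (Xᵀ * Y) + fnormSq Y := by
  have h : ∀ i j, (X i j - Y i j)^2 = X i j^2 - 2*(X i j * Y i j) + Y i j ^2 := by
    intros; ring
  simp only [fnormSq, trace_transpose_mul', Matrix.sub_apply, h, Finset.sum_add_distrib,
    Finset.sum_sub_distrib, Finset.mul_sum]

lemma fnormSq_eq_trace {m n : ℕ} (M : Matrix (Fin m) (Fin n) ℝ) :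
    fnormSq M = trace (Mᵀ * M) := by
  simp only [trace_transpose_mul', fnormSq, sq]

lemma fnormSq_UDV {m n : ℕ} (U : Matrix (Fin m) (Fin n) ℝ) (hU : Uᵀ * U = 1)
    (V : Matrix (Fin n) (Fin n) ℝ) (hV : Vᵀ * V = 1) (d : Fin n → ℝ) :
    fnormSq (U * Matrix.diagonal d * Vᵀ) = ∑ i, d i ^ 2 := by
  rw [fnormSq_eq_trace]
  have h1 : (U * Matrix.diagonal d * Vᵀ)ᵀ * (U * Matrix.diagonal d * Vᵀ)
      = V * (Matrix.diagonal d * (Uᵀ * U) * Matrix.diagonal d) * Vᵀ := by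
    simp only [Matrix.transpose_mul, Matrix.transpose_transpose, Matrix.diagonal_transpose,
      Matrix.mul_assoc]
  rw [h1, hU, Matrix.mul_one, Matrix.diagonal_mul_diagonal, trace_mul_cycle, hV,
    Matrix.one_mul, Matrix.trace_diagonal]
  simp [sq]

lemma scalar_min (a wi b : ℝ) (ha : 0 ≤ a) (hw : 0 ≤ wi) (hb : 0 ≤ b) :
    (1/2) * (a - max (a - wi) 0)^2 + wi * max (a - wi) 0
      ≤ (1/2) * (a - b)^2 + wi * b := by
  rcases le_total wi a with h | h
  · rw [max_eq_left (by linarith)]; nlinarith [sq_nonneg (a - b - wi)]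
  · rw [max_eq_right (by linarith)]; nlinarith [sq_nonneg b, mul_nonneg hb (by linarith : (0:ℝ) ≤ wi - a)]

lemma monotone_eq_of_multiset_eq {n : ℕ} {g h : Fin n → ℝ} (hg : Monotone g) (hh : Monotone h)
    (he : Finset.univ.val.map g = Finset.univ.val.map h) : g = h := by
  have key : ∀ f : Fin n → ℝ, Finset.univ.val.map f = ↑(List.ofFn f) := by
    intro f
    rw [Fin.univ_def, List.ofFn_eq_map]
    rfl
  rw [key, key, Multiset.coe_eq_coe] at he
  have hs1 : (List.ofFn g).Pairwise (· ≤ ·) :=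
    List.pairwise_ofFn.mpr fun i j hij => hg hij.le
  have hs2 : (List.ofFn h).Pairwise (· ≤ ·) :=
    List.pairwise_ofFn.mpr fun i j hij => hh hij.le
  exact List.ofFn_inj.mp (List.Perm.eq_of_pairwise' hs1 hs2 he)

lemma map_univ_perm {n : ℕ} (e : Equiv.Perm (Fin n)) {α : Type*} (g : Fin n → α) :
    Finset.univ.val.map (fun i => g (e i)) = Finset.univ.val.map g := by
  have h1 : Finset.univ.val.map (⇑e) = Finset.univ.val := by
    have := Finset.map_univ_equiv e
    calc Finset.univ.val.map (⇑e) = (Finset.univ.map e.toEmbedding).val := rfl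
      _ = Finset.univ.val := by rw [this]
  calc Finset.univ.val.map (fun i => g (e i))
      = (Finset.univ.val.map (⇑e)).map g := by rw [Multiset.map_map]; rfl
    _ = Finset.univ.val.map g := by rw [h1]

lemma antitone_eq_of_multiset_eq {n : ℕ} {g h : Fin n → ℝ} (hg : Antitone g) (hh : Antitone h)
    (he : Finset.univ.val.map g = Finset.univ.val.map h) : g = h := by
  have hrev : Antitone (fun i : Fin n => i.rev) := fun i j hij => Fin.rev_le_rev.mpr hij
  have hg' : Monotone (fun i => g (Fin.rev i)) := fun i j hij => hg (hrev hij)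
  have hh' : Monotone (fun i => h (Fin.rev i)) := fun i j hij => hh (hrev hij)
  have hmg : Finset.univ.val.map (fun i => g (Fin.rev i)) = Finset.univ.val.map g :=
    map_univ_perm Fin.revPerm g
  have hmh : Finset.univ.val.map (fun i => h (Fin.rev i)) = Finset.univ.val.map h :=
    map_univ_perm Fin.revPerm h
  have := monotone_eq_of_multiset_eq hg' hh' (by rw [hmg, hmh, he])
  funext i
  have := congrFun this i.rev
  simpa [Fin.rev_rev] using this

open Polynomial in
lemma charpoly_conj {n : ℕ} (W M : Matrix (Fin n) (Fin n) ℝ) (hW : Wᵀ * W = 1) :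
    (W * M * Wᵀ).charpoly = M.charpoly := by
  have hW2 : W * Wᵀ = 1 := mul_eq_one_comm.mp hW
  set f : ℝ →+* ℝ[X] := (C : ℝ →+* ℝ[X])
  have hmapmul : ∀ (A B : Matrix (Fin n) (Fin n) ℝ), (A * B).map f = A.map f * B.map f :=
    fun A B => Matrix.map_mul
  have hW2' : (W.map f) * (Wᵀ.map f) = 1 := by
    rw [← hmapmul, hW2]; simp [f]
  have hW1' : (Wᵀ.map f) * (W.map f) = 1 := by
    rw [← hmapmul, hW]; simp [f]
  have hcm : charmatrix (W * M * Wᵀ) = (W.map f) * charmatrix M * (Wᵀ.map f) := by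
    unfold charmatrix
    rw [Matrix.mul_sub, Matrix.sub_mul]
    congr 1
    · have hcomm : Matrix.scalar (Fin n) (X : ℝ[X]) * (Wᵀ.map ⇑f)
          = (Wᵀ.map ⇑f) * Matrix.scalar (Fin n) (X : ℝ[X]) :=
        (Matrix.scalar_commute (X : ℝ[X]) (fun r => Commute.all _ r) (Wᵀ.map ⇑f)).eq
      rw [Matrix.mul_assoc, hcomm, ← Matrix.mul_assoc, hW2', Matrix.one_mul]
    · rw [RingHom.mapMatrix_apply, RingHom.mapMatrix_apply, hmapmul, hmapmul]
  unfold Matrix.charpoly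
  rw [hcm, Matrix.det_mul, Matrix.det_mul]
  have : (W.map f).det * (Wᵀ.map f).det = 1 := by
    rw [← Matrix.det_mul, hW2', Matrix.det_one]
  calc (W.map f).det * (charmatrix M).det * (Wᵀ.map f).det
      = ((W.map f).det * (Wᵀ.map f).det) * (charmatrix M).det := by ring
    _ = (charmatrix M).det := by rw [this, one_mul]

open Polynomial in
lemma charpoly_diagonal' {n : ℕ} (d : Fin n → ℝ) :
    (Matrix.diagonal d).charpoly = ∏ i, (X - C (d i)) := by
  have : charmatrix (Matrix.diagonal d) = Matrix.diagonal (fun i => X - C (d i)) := by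
    ext i j
    by_cases h : i = j
    · subst h; simp [charmatrix_apply_eq]
    · simp [charmatrix_apply_ne _ _ _ h, Matrix.diagonal_apply_ne _ h]
  rw [Matrix.charpoly, this, Matrix.det_diagonal]

open Polynomial in
lemma eig_multiset {n : ℕ} (A : Matrix (Fin n) (Fin n) ℝ) (hA : A.IsHermitian)
    (W : Matrix (Fin n) (Fin n) ℝ) (hW : Wᵀ * W = 1) (d : Fin n → ℝ)
    (hAW : A = W * Matrix.diagonal d * Wᵀ) :
    Finset.univ.val.map hA.eigenvalues = Finset.univ.val.map d := by
  -- spectral theorem over ℝ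
  have hspec := hA.spectral_theorem
  set W₀ : Matrix (Fin n) (Fin n) ℝ := (hA.eigenvectorUnitary : Matrix (Fin n) (Fin n) ℝ) with hW₀
  have hW₀star : star W₀ = W₀ᵀ := by
    rw [Matrix.star_eq_conjTranspose, Matrix.conjTranspose_eq_transpose_of_trivial]
  have hW₀unit : W₀ᵀ * W₀ = 1 := by
    rw [← hW₀star]
    exact (Matrix.mem_unitaryGroup_iff'.mp hA.eigenvectorUnitary.2)
  have hofReal : (RCLike.ofReal ∘ hA.eigenvalues : Fin n → ℝ) = hA.eigenvalues := by
    funext i; simp [RCLike.ofReal_real_eq_id]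
  have hspec' : A = W₀ * Matrix.diagonal hA.eigenvalues * W₀ᵀ := by
    conv_lhs => rw [hspec, Unitary.conjStarAlgAut_apply, ← hW₀, hW₀star, hofReal]
  have hc1 : A.charpoly = ∏ i, (X - C (hA.eigenvalues i)) := by
    conv_lhs => rw [hspec']
    rw [charpoly_conj _ _ hW₀unit, charpoly_diagonal']
  have hc2 : A.charpoly = ∏ i, (X - C (d i)) := by
    conv_lhs => rw [hAW]
    rw [charpoly_conj _ _ hW, charpoly_diagonal']
  have hprod : ∏ i, (X - C (hA.eigenvalues i)) = ∏ i, (X - C (d i)) := by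
    rw [← hc1, hc2]
  have key : ∀ g : Fin n → ℝ, ∏ i, (X - C (g i))
      = ((Finset.univ.val.map g).map (fun a : ℝ => X - C a)).prod := by
    intro g
    rw [Finset.prod_eq_multiset_prod, Multiset.map_map]
    rfl
  have hprod2 : ((Finset.univ.val.map hA.eigenvalues).map (fun a : ℝ => X - C a)).prod
      = ((Finset.univ.val.map d).map (fun a : ℝ => X - C a)).prod := by
    rw [← key, ← key]; exact hprod
  have := congrArg Polynomial.roots hprod2
  rwa [roots_multiset_prod_X_sub_C, roots_multiset_prod_X_sub_C] at this


/-- base (unsorted) singular values -/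
noncomputable def svalBase {m n : ℕ} (Y : Matrix (Fin m) (Fin n) ℝ) (j : Fin n) : ℝ :=
  Real.sqrt ((Matrix.isHermitian_conjTranspose_mul_self Y).eigenvalues j)

noncomputable def svalPerm {m n : ℕ} (Y : Matrix (Fin m) (Fin n) ℝ) : Equiv.Perm (Fin n) :=
  Fin.revPerm.trans (Tuple.sort (svalBase Y))

lemma svalDesc_eq {m n : ℕ} (Y : Matrix (Fin m) (Fin n) ℝ) (i : Fin n) :
    svalDesc Y i = svalBase Y (svalPerm Y i) := rfl

lemma svalDesc_nonneg {m n : ℕ} (Y : Matrix (Fin m) (Fin n) ℝ) (i : Fin n) :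
    0 ≤ svalDesc Y i := Real.sqrt_nonneg _

lemma svalDesc_antitone {m n : ℕ} (Y : Matrix (Fin m) (Fin n) ℝ) :
    Antitone (svalDesc Y) := by
  intro i j hij
  exact Tuple.monotone_sort (svalBase Y) (Fin.rev_le_rev.mpr hij)

lemma svalDesc_sum {m n : ℕ} (Y : Matrix (Fin m) (Fin n) ℝ) (F : ℝ → ℝ) :
    ∑ i, F (svalDesc Y i) = ∑ j, F (svalBase Y j) := by
  simpa [svalDesc_eq] using Equiv.sum_comp (svalPerm Y) (fun j => F (svalBase Y j))

lemma eigenvalues_tmul_nonneg {m n : ℕ} (Y : Matrix (Fin m) (Fin n) ℝ) (j : Fin n) :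
    0 ≤ (Matrix.isHermitian_conjTranspose_mul_self Y).eigenvalues j := by
  exact (Matrix.posSemidef_conjTranspose_mul_self Y).eigenvalues_nonneg j

lemma svalBase_sq {m n : ℕ} (Y : Matrix (Fin m) (Fin n) ℝ) (j : Fin n) :
    svalBase Y j ^ 2 = (Matrix.isHermitian_conjTranspose_mul_self Y).eigenvalues j :=
  Real.sq_sqrt (eigenvalues_tmul_nonneg Y j)

lemma spectral_real {n : ℕ} (A : Matrix (Fin n) (Fin n) ℝ) (hA : A.IsHermitian) :
    ∃ W : Matrix (Fin n) (Fin n) ℝ, Wᵀ * W = 1 ∧ W * Wᵀ = 1 ∧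
      A = W * Matrix.diagonal hA.eigenvalues * Wᵀ := by
  have hspec := hA.spectral_theorem
  set W₀ : Matrix (Fin n) (Fin n) ℝ := (hA.eigenvectorUnitary : Matrix (Fin n) (Fin n) ℝ) with hW₀
  have hW₀star : star W₀ = W₀ᵀ := by
    rw [Matrix.star_eq_conjTranspose, Matrix.conjTranspose_eq_transpose_of_trivial]
  have hW₀unit : W₀ᵀ * W₀ = 1 := by
    rw [← hW₀star]
    exact (Matrix.mem_unitaryGroup_iff'.mp hA.eigenvectorUnitary.2)
  have hofReal : (RCLike.ofReal ∘ hA.eigenvalues : Fin n → ℝ) = hA.eigenvalues := by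
    funext i; simp [RCLike.ofReal_real_eq_id]
  refine ⟨W₀, hW₀unit, mul_eq_one_comm.mp hW₀unit, ?_⟩
  conv_lhs => rw [hspec, Unitary.conjStarAlgAut_apply, ← hW₀, hW₀star, hofReal]

lemma trace_tmul_eq_sum_eig {m n : ℕ} (Y : Matrix (Fin m) (Fin n) ℝ) :
    Matrix.trace (Yᵀ * Y) = ∑ j, (Matrix.isHermitian_conjTranspose_mul_self Y).eigenvalues j := by
  obtain ⟨W, hW1, hW2, hA⟩ := spectral_real _ (Matrix.isHermitian_conjTranspose_mul_self Y)
  have ht : Yᵀ * Y = Yᴴ * Y := by rw [Matrix.conjTranspose_eq_transpose_of_trivial]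
  rw [ht]
  conv_lhs => rw [hA]
  rw [trace_mul_cycle, hW1, Matrix.one_mul, Matrix.trace_diagonal]

lemma sum_sq_svalDesc {m n : ℕ} (Y : Matrix (Fin m) (Fin n) ℝ) :
    ∑ i, (svalDesc Y i) ^ 2 = fnormSq Y := by
  rw [svalDesc_sum Y (fun x => x ^ 2), fnormSq_eq_trace, trace_tmul_eq_sum_eig]
  exact Finset.sum_congr rfl fun j _ => svalBase_sq Y j

lemma telescope_Ico (A : ℕ → ℝ) (n k : ℕ) (hAn : A n = 0) (hk : k < n) :
    A k = ∑ t ∈ Finset.Ico k n, (A t - A (t+1)) := by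
  rw [Finset.sum_Ico_eq_sum_range]
  have h := Finset.sum_range_sub' (fun i => A (k + i)) (n - k)
  simp only [Nat.add_zero] at h
  rw [show k + (n - k) = n from by omega, hAn, sub_zero] at h
  rw [← h]
  exact Finset.sum_congr rfl fun i _ => by rw [Nat.add_succ]

lemma abel_helper {n : ℕ} (A c : ℕ → ℝ) (hAn : A n = 0) :
    ∑ i ∈ Finset.range n, A i * c i
      = ∑ t ∈ Finset.range n, (A t - A (t+1)) * ∑ i ∈ Finset.range (t+1), c i := by
  calc ∑ i ∈ Finset.range n, A i * c i
      = ∑ i ∈ Finset.range n, ∑ t ∈ Finset.Ico i n, (A t - A (t+1)) * c i := by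
        refine Finset.sum_congr rfl fun i hi => ?_
        rw [← Finset.sum_mul, ← telescope_Ico A n i hAn (Finset.mem_range.mp hi)]
    _ = ∑ t ∈ Finset.range n, ∑ i ∈ Finset.Ico 0 (t+1), (A t - A (t+1)) * c i := by
        rw [← Nat.Ico_zero_eq_range]
        exact Finset.sum_Ico_Ico_comm 0 n _
    _ = ∑ t ∈ Finset.range n, (A t - A (t+1)) * ∑ i ∈ Finset.range (t+1), c i := by
        refine Finset.sum_congr rfl fun t _ => ?_
        rw [Nat.Ico_zero_eq_range, Finset.mul_sum]

lemma substochastic_bound {n : ℕ} (a b : Fin n → ℝ) (ha : Antitone a) (ha0 : ∀ i, 0 ≤ a i)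
    (hb : Antitone b) (hb0 : ∀ i, 0 ≤ b i)
    (T : Fin n → Fin n → ℝ) (hT0 : ∀ i j, 0 ≤ T i j)
    (hrow : ∀ i, ∑ j, T i j ≤ 1) (hcol : ∀ j, ∑ i, T i j ≤ 1) :
    ∑ i, ∑ j, a i * b j * T i j ≤ ∑ i, a i * b i := by
  classical
  set A : ℕ → ℝ := fun k => if h : k < n then a ⟨k, h⟩ else 0 with hAdef
  set B : ℕ → ℝ := fun k => if h : k < n then b ⟨k, h⟩ else 0 with hBdef
  set Tn : ℕ → ℕ → ℝ := fun i j => if h : i < n ∧ j < n then T ⟨i, h.1⟩ ⟨j, h.2⟩ else 0 with hTdef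
  have hAn : A n = 0 := by simp [hAdef]
  have hBn : B n = 0 := by simp [hBdef]
  have hA0 : ∀ k, 0 ≤ A k := by
    intro k; by_cases h : k < n <;> simp [hAdef, h, ha0]
  have hB0 : ∀ k, 0 ≤ B k := by
    intro k; by_cases h : k < n <;> simp [hBdef, h, hb0]
  have hTn0 : ∀ i j, 0 ≤ Tn i j := by
    intro i j; by_cases h : i < n ∧ j < n <;> simp [hTdef, h]
    exact hT0 _ _
  have hδA : ∀ t, 0 ≤ A t - A (t+1) := by
    intro t
    by_cases h1 : t + 1 < n
    · have h0 : t < n := by omega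
      simp only [hAdef, dif_pos h0, dif_pos h1]
      have := ha (show (⟨t, h0⟩ : Fin n) ≤ ⟨t+1, h1⟩ from by simp [Fin.le_def])
      linarith
    · by_cases h0 : t < n
      · simp only [hAdef, dif_pos h0, dif_neg h1]
        have := ha0 ⟨t, h0⟩; linarith
      · simp [hAdef, dif_neg h0, dif_neg h1]
  have hδB : ∀ t, 0 ≤ B t - B (t+1) := by
    intro t
    by_cases h1 : t + 1 < n
    · have h0 : t < n := by omega
      simp only [hBdef, dif_pos h0, dif_pos h1]
      have := hb (show (⟨t, h0⟩ : Fin n) ≤ ⟨t+1, h1⟩ from by simp [Fin.le_def])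
      linarith
    · by_cases h0 : t < n
      · simp only [hBdef, dif_pos h0, dif_neg h1]
        have := hb0 ⟨t, h0⟩; linarith
      · simp [hBdef, dif_neg h0, dif_neg h1]
  -- partial row and column sums of Tn are at most 1
  have hrow' : ∀ i t, ∑ j ∈ Finset.range t, Tn i j ≤ 1 := by
    intro i t
    have hsub : ∑ j ∈ Finset.range t, Tn i j ≤ ∑ j ∈ Finset.range (max t n), Tn i j :=
      Finset.sum_le_sum_of_subset_of_nonneg
        (Finset.range_subset_range.mpr (le_max_left _ _)) (fun j _ _ => hTn0 i j)
    have heq : ∑ j ∈ Finset.range (max t n), Tn i j = ∑ j ∈ Finset.range n, Tn i j := by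
      refine (Finset.sum_subset (Finset.range_subset_range.mpr (le_max_right _ _)) ?_).symm
      intro x _ hx
      have : ¬ x < n := by simpa using hx
      simp [hTdef, this]
    have hfull : ∑ j ∈ Finset.range n, Tn i j ≤ 1 := by
      by_cases h : i < n
      · rw [← Fin.sum_univ_eq_sum_range (fun j => Tn i j) n]
        calc ∑ j : Fin n, Tn i ↑j = ∑ j : Fin n, T ⟨i, h⟩ j := by
              refine Finset.sum_congr rfl fun j _ => ?_
              simp [hTdef, h, j.2]
          _ ≤ 1 := hrow ⟨i, h⟩
      · have : ∀ j ∈ Finset.range n, Tn i j = 0 := by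
          intro j _; simp [hTdef, h]
        rw [Finset.sum_congr rfl this]; simp
    linarith [hsub, heq.le, heq.ge]
  have hcol' : ∀ j t, ∑ i ∈ Finset.range t, Tn i j ≤ 1 := by
    intro j t
    have hsub : ∑ i ∈ Finset.range t, Tn i j ≤ ∑ i ∈ Finset.range (max t n), Tn i j :=
      Finset.sum_le_sum_of_subset_of_nonneg
        (Finset.range_subset_range.mpr (le_max_left _ _)) (fun i _ _ => hTn0 i j)
    have heq : ∑ i ∈ Finset.range (max t n), Tn i j = ∑ i ∈ Finset.range n, Tn i j := by
      refine (Finset.sum_subset (Finset.range_subset_range.mpr (le_max_right _ _)) ?_).symm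
      intro x _ hx
      have : ¬ x < n := by simpa using hx
      simp [hTdef, this]
    have hfull : ∑ i ∈ Finset.range n, Tn i j ≤ 1 := by
      by_cases h : j < n
      · rw [← Fin.sum_univ_eq_sum_range (fun i => Tn i j) n]
        calc ∑ i : Fin n, Tn ↑i j = ∑ i : Fin n, T i ⟨j, h⟩ := by
              refine Finset.sum_congr rfl fun i _ => ?_
              simp [hTdef, h, i.2]
          _ ≤ 1 := hcol ⟨j, h⟩
      · have : ∀ i ∈ Finset.range n, Tn i j = 0 := by
          intro i _; simp [hTdef, h]
        rw [Finset.sum_congr rfl this]; simp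
    linarith [hsub, heq.le, heq.ge]
  -- convert the LHS to ℕ-indexed sums
  have step0 : ∑ i, ∑ j, a i * b j * T i j
      = ∑ i ∈ Finset.range n, A i * ∑ j ∈ Finset.range n, B j * Tn i j := by
    rw [← Fin.sum_univ_eq_sum_range (fun i => A i * ∑ j ∈ Finset.range n, B j * Tn i j) n]
    refine Finset.sum_congr rfl fun i _ => ?_
    rw [← Fin.sum_univ_eq_sum_range (fun j => B j * Tn ↑i j) n, Finset.mul_sum]
    refine Finset.sum_congr rfl fun j _ => ?_
    simp only [hAdef, hBdef, hTdef, dif_pos i.2, dif_pos j.2, dif_pos (And.intro i.2 j.2)]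
    rw [Fin.eta, Fin.eta]
    ring
  -- convert the RHS
  have step0' : ∑ i, a i * b i = ∑ i ∈ Finset.range n, A i * B i := by
    rw [← Fin.sum_univ_eq_sum_range (fun i => A i * B i) n]
    refine Finset.sum_congr rfl fun i _ => ?_
    simp only [hAdef, hBdef, dif_pos i.2, Fin.eta]
  set P : ℕ → ℕ → ℝ := fun t u => ∑ j ∈ Finset.range (u+1), ∑ i ∈ Finset.range (t+1), Tn i j
    with hPdef
  set Q : ℕ → ℕ → ℝ := fun t u => ∑ i ∈ Finset.range (u+1), (if i ≤ t then (1:ℝ) else 0)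
    with hQdef
  have lhs_eq : ∑ i ∈ Finset.range n, A i * ∑ j ∈ Finset.range n, B j * Tn i j
      = ∑ t ∈ Finset.range n, (A t - A (t+1)) * ∑ u ∈ Finset.range n, (B u - B (u+1)) * P t u := by
    rw [abel_helper A _ hAn]
    refine Finset.sum_congr rfl fun t _ => ?_
    congr 1
    have hswap : ∑ i ∈ Finset.range (t+1), ∑ j ∈ Finset.range n, B j * Tn i j
        = ∑ j ∈ Finset.range n, B j * ∑ i ∈ Finset.range (t+1), Tn i j := by
      rw [Finset.sum_comm]
      exact Finset.sum_congr rfl fun j _ => by rw [Finset.mul_sum]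
    rw [hswap, abel_helper B _ hBn]
  have rhs_eq : ∑ i ∈ Finset.range n, A i * B i
      = ∑ t ∈ Finset.range n, (A t - A (t+1)) * ∑ u ∈ Finset.range n, (B u - B (u+1)) * Q t u := by
    rw [abel_helper A B hAn]
    refine Finset.sum_congr rfl fun t ht => ?_
    congr 1
    have hfil : (Finset.range n).filter (fun i => i ≤ t) = Finset.range (t+1) := by
      ext x
      simp only [Finset.mem_filter, Finset.mem_range]
      have := Finset.mem_range.mp ht
      omega
    have hind : ∑ i ∈ Finset.range (t+1), B i
        = ∑ i ∈ Finset.range n, B i * (if i ≤ t then (1:ℝ) else 0) := by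
      rw [← hfil, Finset.sum_filter]
      refine Finset.sum_congr rfl fun i _ => ?_
      by_cases h : i ≤ t <;> simp [h]
    rw [hind, abel_helper B _ hBn]
  rw [step0, step0', lhs_eq, rhs_eq]
  refine Finset.sum_le_sum fun t ht => ?_
  refine mul_le_mul_of_nonneg_left ?_ (hδA t)
  refine Finset.sum_le_sum fun u hu => ?_
  refine mul_le_mul_of_nonneg_left ?_ (hδB u)
  have hQval : Q t u = ((min t u : ℕ) + 1 : ℝ) := by
    rw [hQdef]
    simp only
    rw [Finset.sum_boole]
    have hfil2 : (Finset.range (u+1)).filter (fun i => i ≤ t) = Finset.range (min t u + 1) := by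
      ext x; simp only [Finset.mem_filter, Finset.mem_range]; omega
    rw [hfil2, Finset.card_range]
    push_cast; ring
  have hP1 : P t u ≤ (u+1 : ℝ) := by
    calc P t u ≤ ∑ j ∈ Finset.range (u+1), (1:ℝ) :=
          Finset.sum_le_sum fun j _ => hcol' j (t+1)
    _ = (u+1 : ℝ) := by simp
  have hP2 : P t u ≤ (t+1 : ℝ) := by
    have hsw : P t u = ∑ i ∈ Finset.range (t+1), ∑ j ∈ Finset.range (u+1), Tn i j :=
      Finset.sum_comm
    rw [hsw]
    calc ∑ i ∈ Finset.range (t+1), ∑ j ∈ Finset.range (u+1), Tn i j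
        ≤ ∑ i ∈ Finset.range (t+1), (1:ℝ) :=
          Finset.sum_le_sum fun i _ => hrow' i (u+1)
    _ = (t+1 : ℝ) := by simp
  rw [hQval]
  rcases le_total t u with h | h
  · rw [min_eq_left h]; push_cast at hP2 ⊢; linarith
  · rw [min_eq_right h]; push_cast at hP1 ⊢; linarith

lemma diag_tmul {m n : ℕ} (M : Matrix (Fin m) (Fin n) ℝ) (j : Fin n) :
    (Mᵀ * M) j j = ∑ i, M i j ^ 2 := by
  simp [Matrix.mul_apply, sq]

lemma diag_mult {m n : ℕ} (M : Matrix (Fin m) (Fin n) ℝ) (i : Fin m) :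
    (M * Mᵀ) i i = ∑ j, M i j ^ 2 := by
  simp [Matrix.mul_apply, sq]

lemma vonNeumann {m n : ℕ} (U : Matrix (Fin m) (Fin n) ℝ) (hU : Uᵀ * U = 1)
    (V : Matrix (Fin n) (Fin n) ℝ) (hV : Vᵀ * V = 1)
    (σ : Fin n → ℝ) (hσ0 : ∀ i, 0 ≤ σ i) (hσa : Antitone σ)
    (Y : Matrix (Fin m) (Fin n) ℝ) :
    Matrix.trace ((U * Matrix.diagonal σ * Vᵀ)ᵀ * Y) ≤ ∑ i, σ i * svalDesc Y i := by
  classical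
  obtain ⟨W, hW1, hW2, hYW⟩ := spectral_real _ (Matrix.isHermitian_conjTranspose_mul_self Y)
  set lam : Fin n → ℝ := (Matrix.isHermitian_conjTranspose_mul_self Y).eigenvalues with hlam
  have hYW' : Yᵀ * Y = W * Matrix.diagonal lam * Wᵀ := by
    rw [show Yᵀ = Yᴴ from (Matrix.conjTranspose_eq_transpose_of_trivial Y).symm]
    exact hYW
  have hlam0 : ∀ j, 0 ≤ lam j := eigenvalues_tmul_nonneg Y
  set s0 : Fin n → ℝ := svalBase Y with hs0def
  have hs0sq : ∀ j, s0 j ^ 2 = lam j := svalBase_sq Y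
  have hs00 : ∀ j, 0 ≤ s0 j := fun j => Real.sqrt_nonneg _
  set Dinv : Matrix (Fin n) (Fin n) ℝ :=
    Matrix.diagonal (fun j => if s0 j = 0 then 0 else (s0 j)⁻¹) with hDinv
  set P : Matrix (Fin m) (Fin n) ℝ := Y * W * Dinv with hPdef
  set Bm : Matrix (Fin n) (Fin n) ℝ := Uᵀ * P with hBmdef
  set G : Matrix (Fin n) (Fin n) ℝ := Wᵀ * V with hGdef
  set ind : Fin n → ℝ := fun j => if s0 j = 0 then 0 else 1 with hinddef
  -- W-conjugated Gram matrix is diagonal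
  have hWYW : Wᵀ * (Yᵀ * Y) * W = Matrix.diagonal lam := by
    rw [hYW', show Wᵀ * (W * Matrix.diagonal lam * Wᵀ) * W
        = Wᵀ * W * Matrix.diagonal lam * (Wᵀ * W) from by
      simp only [Matrix.mul_assoc], hW1, Matrix.one_mul, Matrix.mul_one]
  have hYWgram : (Y * W)ᵀ * (Y * W) = Matrix.diagonal lam := by
    rw [Matrix.transpose_mul, show Wᵀ * Yᵀ * (Y * W) = Wᵀ * (Yᵀ * Y) * W from by
      simp only [Matrix.mul_assoc], hWYW]
  have hPtP : Pᵀ * P = Matrix.diagonal ind := by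
    have h1 : Pᵀ * P = Dinv * ((Y * W)ᵀ * (Y * W)) * Dinv := by
      rw [hPdef, Matrix.transpose_mul, show Dinv ᵀ = Dinv from by
        rw [hDinv, Matrix.diagonal_transpose], Matrix.transpose_mul]
      simp only [Matrix.mul_assoc]
    rw [h1, hYWgram, hDinv, Matrix.diagonal_mul_diagonal, Matrix.diagonal_mul_diagonal]
    ext j k
    by_cases hjk : j = k
    · subst hjk
      rw [Matrix.diagonal_apply_eq, Matrix.diagonal_apply_eq]
      by_cases h : s0 j = 0
      · simp [hinddef, h]
      · simp only [hinddef, if_neg h]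
        rw [show lam j = s0 j ^ 2 from (hs0sq j).symm]
        field_simp
    · rw [Matrix.diagonal_apply_ne _ hjk, Matrix.diagonal_apply_ne _ hjk]
  have hcolzero : ∀ j, s0 j = 0 → ∀ i, (Y * W) i j = 0 := by
    intro j hj i
    have hsum : ∑ k, ((Y * W) k j) ^ 2 = lam j := by
      rw [← diag_tmul (Y * W) j, hYWgram, Matrix.diagonal_apply_eq]
    have hlamj : lam j = 0 := by rw [← hs0sq j, hj]; ring
    have hzero : ∑ k, ((Y * W) k j) ^ 2 = 0 := by rw [hsum, hlamj]
    have := (Finset.sum_eq_zero_iff_of_nonneg (fun k _ => sq_nonneg ((Y * W) k j))).mp hzero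
    exact pow_eq_zero_iff (two_ne_zero) |>.mp (this i (Finset.mem_univ i))
  have hYWP : Y * W = P * Matrix.diagonal s0 := by
    rw [hPdef, Matrix.mul_assoc, hDinv, Matrix.diagonal_mul_diagonal]
    ext i j
    rw [Matrix.mul_diagonal]
    by_cases h : s0 j = 0
    · rw [hcolzero j h i]
      simp [h]
    · rw [if_neg h]
      field_simp
  have hPind : P * Matrix.diagonal ind = P := by
    rw [hPdef, Matrix.mul_assoc, Matrix.mul_assoc, hDinv, Matrix.diagonal_mul_diagonal]
    have hfun : (fun i => (if s0 i = 0 then (0:ℝ) else (s0 i)⁻¹) * ind i)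
        = (fun j => if s0 j = 0 then (0:ℝ) else (s0 j)⁻¹) := by
      funext j
      by_cases h : s0 j = 0 <;> simp [hinddef, h]
    rw [hfun, Matrix.mul_assoc]
  -- column bound for Bm
  have hBcol : ∀ j, ∑ i, Bm i j ^ 2 ≤ 1 := by
    intro j
    have hPU : Pᵀ * U = Bmᵀ := by
      conv_rhs => rw [hBmdef, Matrix.transpose_mul, Matrix.transpose_transpose]
    have hexp : (P - U * Bm)ᵀ * (P - U * Bm) = Pᵀ * P - Bmᵀ * Bm := by
      rw [Matrix.transpose_sub, Matrix.sub_mul, Matrix.mul_sub, Matrix.mul_sub]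
      have k1 : Pᵀ * (U * Bm) = Bmᵀ * Bm := by rw [← Matrix.mul_assoc, hPU]
      have k2 : (U * Bm)ᵀ * P = Bmᵀ * Bm := by
        rw [Matrix.transpose_mul, Matrix.mul_assoc, hBmdef]
      have k3 : (U * Bm)ᵀ * (U * Bm) = Bmᵀ * Bm := by
        rw [Matrix.transpose_mul, show Bmᵀ * Uᵀ * (U * Bm) = Bmᵀ * (Uᵀ * U) * Bm from by
          simp only [Matrix.mul_assoc], hU, Matrix.mul_one]
      rw [k1, k2, k3]
      abel
    have hnn : 0 ≤ ((P - U * Bm)ᵀ * (P - U * Bm)) j j := by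
      rw [diag_tmul]
      exact Finset.sum_nonneg fun k _ => sq_nonneg _
    rw [hexp, Matrix.sub_apply, hPtP, Matrix.diagonal_apply_eq] at hnn
    have hd : (Bmᵀ * Bm) j j = ∑ i, Bm i j ^ 2 := diag_tmul Bm j
    have hind1 : ind j ≤ 1 := by by_cases h : s0 j = 0 <;> simp [hinddef, h]
    linarith
  -- row bound for Bm
  have hBrow : ∀ i, ∑ j, Bm i j ^ 2 ≤ 1 := by
    intro i
    set E : Matrix (Fin m) (Fin m) ℝ := 1 - P * Pᵀ with hEdef
    have hEsymm : Eᵀ = E := by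
      rw [hEdef, Matrix.transpose_sub, Matrix.transpose_one, Matrix.transpose_mul,
        Matrix.transpose_transpose]
    have hEE : E * E = E := by
      have hq : P * Pᵀ * (P * Pᵀ) = P * Pᵀ := by
        calc P * Pᵀ * (P * Pᵀ) = P * (Pᵀ * P) * Pᵀ := by simp only [Matrix.mul_assoc]
        _ = P * Matrix.diagonal ind * Pᵀ := by rw [hPtP]
        _ = P * Pᵀ := by rw [hPind]
      have hexp2 : (1 - P * Pᵀ) * (1 - P * Pᵀ)
          = 1 - P * Pᵀ - (P * Pᵀ - P * Pᵀ * (P * Pᵀ)) := by noncomm_ring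
      rw [hEdef, hexp2, hq]
      abel
    have hUEU : Uᵀ * E * U = 1 - Bm * Bmᵀ := by
      rw [hEdef, Matrix.mul_sub, Matrix.sub_mul, Matrix.mul_one, hU]
      congr 1
      conv_rhs => rw [hBmdef, Matrix.transpose_mul, Matrix.transpose_transpose]
      simp only [Matrix.mul_assoc]
    have hfact : (E * U)ᵀ * (E * U) = Uᵀ * E * U := by
      rw [Matrix.transpose_mul, hEsymm, show Uᵀ * E * (E * U) = Uᵀ * (E * E) * U from by
        simp only [Matrix.mul_assoc], hEE]
    have hnn : 0 ≤ ((E * U)ᵀ * (E * U)) i i := by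
      rw [diag_tmul]
      exact Finset.sum_nonneg fun k _ => sq_nonneg _
    rw [hfact, hUEU, Matrix.sub_apply, Matrix.one_apply_eq] at hnn
    have hd : (Bm * Bmᵀ) i i = ∑ j, Bm i j ^ 2 := diag_mult Bm i
    linarith
  -- orthogonality of G
  have hVVt : V * Vᵀ = 1 := mul_eq_one_comm.mp hV
  have hGtG : Gᵀ * G = 1 := by
    rw [hGdef, Matrix.transpose_mul, Matrix.transpose_transpose,
      show Vᵀ * W * (Wᵀ * V) = Vᵀ * (W * Wᵀ) * V from by simp only [Matrix.mul_assoc],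
      hW2, Matrix.mul_one, hV]
  have hGGt : G * Gᵀ = 1 := mul_eq_one_comm.mp hGtG
  have hGrow : ∀ j, ∑ i, G j i ^ 2 = 1 := by
    intro j
    have h := diag_mult G j
    rw [hGGt, Matrix.one_apply_eq] at h
    exact h.symm
  have hGcol : ∀ i, ∑ j, G j i ^ 2 = 1 := by
    intro i
    have h := diag_tmul G i
    rw [hGtG, Matrix.one_apply_eq] at h
    exact h.symm
  -- trace formula
  set N : Matrix (Fin n) (Fin n) ℝ := Uᵀ * Y * V with hNdef
  have htr : Matrix.trace ((U * Matrix.diagonal σ * Vᵀ)ᵀ * Y) = ∑ i, σ i * N i i := by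
    have h1 : (U * Matrix.diagonal σ * Vᵀ)ᵀ * Y = V * (Matrix.diagonal σ * (Uᵀ * Y)) := by
      rw [Matrix.transpose_mul, Matrix.transpose_mul, Matrix.transpose_transpose,
        Matrix.diagonal_transpose]
      simp only [Matrix.mul_assoc]
    rw [h1, Matrix.trace_mul_comm]
    rw [show Matrix.diagonal σ * (Uᵀ * Y) * V = Matrix.diagonal σ * N from by
      rw [hNdef]; simp only [Matrix.mul_assoc]]
    simp [Matrix.trace, Matrix.diag, Matrix.diagonal_mul]
  have hWWV : W * (Wᵀ * V) = V := by rw [← Matrix.mul_assoc, hW2, Matrix.one_mul]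
  have hNfac : N = Bm * Matrix.diagonal s0 * G := by
    have h2 : Bm * Matrix.diagonal s0 = Uᵀ * (Y * W) := by
      rw [hBmdef, hYWP, Matrix.mul_assoc]
    rw [hNdef, hGdef, h2]
    simp only [Matrix.mul_assoc, hWWV]
  have hNdiag : ∀ i, N i i = ∑ j, Bm i j * s0 j * G j i := by
    intro i
    rw [hNfac, Matrix.mul_apply]
    refine Finset.sum_congr rfl fun j _ => ?_
    rw [Matrix.mul_diagonal]
  set T0 : Fin n → Fin n → ℝ := fun i j => (Bm i j ^ 2 + G j i ^ 2) / 2 with hT0def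
  have hT00 : ∀ i j, 0 ≤ T0 i j := by
    intro i j
    rw [hT0def]
    positivity
  have hTrow : ∀ i, ∑ j, T0 i j ≤ 1 := by
    intro i
    have hsplit : ∑ j, T0 i j = ((∑ j, Bm i j ^ 2) + ∑ j, G j i ^ 2) / 2 := by
      rw [hT0def, ← Finset.sum_add_distrib, ← Finset.sum_div]
    rw [hsplit, hGcol i]
    linarith [hBrow i]
  have hTcol : ∀ j, ∑ i, T0 i j ≤ 1 := by
    intro j
    have hsplit : ∑ i, T0 i j = ((∑ i, Bm i j ^ 2) + ∑ i, G j i ^ 2) / 2 := by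
      rw [hT0def, ← Finset.sum_add_distrib, ← Finset.sum_div]
    rw [hsplit, hGrow j]
    linarith [hBcol j]
  have step1 : ∑ i, σ i * N i i ≤ ∑ i, ∑ j, σ i * s0 j * T0 i j := by
    refine Finset.sum_le_sum fun i _ => ?_
    rw [hNdiag i, Finset.mul_sum]
    refine Finset.sum_le_sum fun j _ => ?_
    have h1 : Bm i j * G j i ≤ T0 i j := by
      rw [hT0def]
      nlinarith [sq_nonneg (Bm i j - G j i)]
    have h2 : 0 ≤ σ i * s0 j := mul_nonneg (hσ0 i) (hs00 j)
    calc σ i * (Bm i j * s0 j * G j i) = σ i * s0 j * (Bm i j * G j i) := by ring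
    _ ≤ σ i * s0 j * T0 i j := mul_le_mul_of_nonneg_left h1 h2
  set e := svalPerm Y with hedef
  have hre : ∀ i, ∑ j, σ i * s0 j * T0 i j = ∑ j, σ i * svalDesc Y j * T0 i (e j) := by
    intro i
    rw [← Equiv.sum_comp e (fun j => σ i * s0 j * T0 i j)]
    refine Finset.sum_congr rfl fun j _ => ?_
    rw [svalDesc_eq]
  have happ : ∑ i, ∑ j, σ i * svalDesc Y j * T0 i (e j) ≤ ∑ i, σ i * svalDesc Y i := by
    refine substochastic_bound σ (svalDesc Y) hσa hσ0 (svalDesc_antitone Y) (svalDesc_nonneg Y)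
      (fun i j => T0 i (e j)) (fun i j => hT00 i (e j)) (fun i => ?_) (fun j => ?_)
    · rw [Equiv.sum_comp e (fun j => T0 i j)]
      exact hTrow i
    · exact hTcol (e j)
  rw [htr]
  calc ∑ i, σ i * N i i ≤ ∑ i, ∑ j, σ i * s0 j * T0 i j := step1
  _ = ∑ i, ∑ j, σ i * svalDesc Y j * T0 i (e j) := Finset.sum_congr rfl fun i _ => hre i
  _ ≤ ∑ i, σ i * svalDesc Y i := happ

lemma svalDesc_UDV {m n : ℕ} (U : Matrix (Fin m) (Fin n) ℝ) (hU : Uᵀ * U = 1)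
    (V : Matrix (Fin n) (Fin n) ℝ) (hV : Vᵀ * V = 1)
    (c : Fin n → ℝ) (hc0 : ∀ i, 0 ≤ c i) (hca : Antitone c) :
    svalDesc (U * Matrix.diagonal c * Vᵀ) = c := by
  set Z : Matrix (Fin m) (Fin n) ℝ := U * Matrix.diagonal c * Vᵀ with hZdef
  have hZ : Zᴴ * Z = V * Matrix.diagonal (fun i => c i ^ 2) * Vᵀ := by
    rw [Matrix.conjTranspose_eq_transpose_of_trivial]
    have h1 : Zᵀ * Z = V * (Matrix.diagonal c * (Uᵀ * U) * Matrix.diagonal c) * Vᵀ := by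
      rw [hZdef]
      simp only [Matrix.transpose_mul, Matrix.transpose_transpose, Matrix.diagonal_transpose,
        Matrix.mul_assoc]
    rw [h1, hU, Matrix.mul_one, Matrix.diagonal_mul_diagonal,
      show (fun i => c i * c i) = fun i => c i ^ 2 from funext fun i => (sq (c i)).symm]
  have hmult := eig_multiset (Zᴴ * Z) (Matrix.isHermitian_conjTranspose_mul_self Z) V hV _ hZ
  have h1 : Finset.univ.val.map (svalDesc Z) = Finset.univ.val.map (svalBase Z) := by
    have heq : svalDesc Z = fun i => svalBase Z (svalPerm Z i) := funext (svalDesc_eq Z)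
    rw [heq]
    exact map_univ_perm (svalPerm Z) (svalBase Z)
  have h2 : Finset.univ.val.map (svalBase Z) = Finset.univ.val.map c := by
    calc Finset.univ.val.map (svalBase Z)
        = (Finset.univ.val.map
            (Matrix.isHermitian_conjTranspose_mul_self Z).eigenvalues).map Real.sqrt := by
          rw [Multiset.map_map]; rfl
      _ = (Finset.univ.val.map (fun i => c i ^ 2)).map Real.sqrt := by rw [hmult]
      _ = Finset.univ.val.map c := by
          rw [Multiset.map_map]
          congr 1
          funext i
          exact Real.sqrt_sq (hc0 i)
  exact antitone_eq_of_multiset_eq (svalDesc_antitone Z) hca (h1.trans h2)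


/-- WNNM proximal step (Gu et al. 2014): if `X = U Σ Vᵀ` is an SVD with
nonincreasing singular values `σ` and the weights `w` are nonnegative and
nondecreasing, then `X̂ = U S_w(Σ) Vᵀ` with `S_w(Σ) = diag(max(σᵢ − wᵢ, 0))` is a
global minimizer of `Y ↦ (1/2)‖X − Y‖_F² + ∑ᵢ wᵢ σᵢ(Y)`. -/
theorem wnnm_soft_thresholding {m n : ℕ} (hmn : n ≤ m)
    (X : Matrix (Fin m) (Fin n) ℝ)
    (U : Matrix (Fin m) (Fin n) ℝ) (hU : Uᵀ * U = 1)
    (V : Matrix (Fin n) (Fin n) ℝ) (hV : Vᵀ * V = 1)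
    (σ : Fin n → ℝ) (hσpos : ∀ i, 0 ≤ σ i) (hσmono : Antitone σ)
    (hX : X = U * Matrix.diagonal σ * Vᵀ)
    (w : Fin n → ℝ) (hwpos : ∀ i, 0 ≤ w i) (hwmono : Monotone w) :
    let Xhat : Matrix (Fin m) (Fin n) ℝ :=
      U * Matrix.diagonal (fun i => max (σ i - w i) 0) * Vᵀ
    ∀ Y : Matrix (Fin m) (Fin n) ℝ,
      (1 / 2) * fnormSq (X - Xhat) + ∑ i, w i * svalDesc Xhat i
        ≤ (1 / 2) * fnormSq (X - Y) + ∑ i, w i * svalDesc Y i := by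
  intro Xhat Y
  set c : Fin n → ℝ := fun i => max (σ i - w i) 0 with hcdef
  have hc0 : ∀ i, 0 ≤ c i := fun i => le_max_right _ _
  have hca : Antitone c := by
    intro i j hij
    have h1 := hσmono hij
    have h2 := hwmono hij
    exact max_le_max (by linarith) le_rfl
  have hXhat : Xhat = U * Matrix.diagonal c * Vᵀ := rfl
  have hsval : svalDesc Xhat = c := by
    rw [hXhat]
    exact svalDesc_UDV U hU V hV c hc0 hca
  set s : Fin n → ℝ := svalDesc Y with hsdef
  have hXsub : X - Xhat = U * Matrix.diagonal (fun i => σ i - c i) * Vᵀ := by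
    rw [hX, hXhat, ← Matrix.sub_mul, ← Matrix.mul_sub]
    congr 2
    ext i j
    by_cases h : i = j
    · subst h; simp [Matrix.diagonal_apply_eq]
    · simp [Matrix.diagonal_apply_ne _ h]
  have hfX : fnormSq X = ∑ i, σ i ^ 2 := by
    rw [hX]; exact fnormSq_UDV U hU V hV σ
  have hfXs : fnormSq (X - Xhat) = ∑ i, (σ i - c i) ^ 2 := by
    rw [hXsub]; exact fnormSq_UDV U hU V hV _
  have hfY : fnormSq Y = ∑ i, s i ^ 2 := (sum_sq_svalDesc Y).symm
  have hVN : Matrix.trace (Xᵀ * Y) ≤ ∑ i, σ i * s i := by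
    rw [hX]; exact vonNeumann U hU V hV σ hσpos hσmono Y
  calc (1 / 2) * fnormSq (X - Xhat) + ∑ i, w i * svalDesc Xhat i
      = ∑ i, ((1/2) * (σ i - c i) ^ 2 + w i * c i) := by
        rw [hfXs, hsval, Finset.mul_sum, ← Finset.sum_add_distrib]
    _ ≤ ∑ i, ((1/2) * (σ i - s i) ^ 2 + w i * s i) := by
        refine Finset.sum_le_sum fun i _ => ?_
        have h := scalar_min (σ i) (w i) (s i) (hσpos i) (hwpos i) (svalDesc_nonneg Y i)
        rwa [show max (σ i - w i) 0 = c i from rfl] at h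
    _ = (1/2) * (∑ i, σ i ^ 2) - ∑ i, σ i * s i + (1/2) * (∑ i, s i ^ 2)
          + ∑ i, w i * s i := by
        have hterm : ∀ i, (1/2) * (σ i - s i) ^ 2 + w i * s i
            = (1/2) * σ i ^ 2 - σ i * s i + (1/2) * s i ^ 2 + w i * s i := by
          intro i; ring
        rw [Finset.sum_congr rfl fun i _ => hterm i]
        simp only [Finset.sum_add_distrib, Finset.sum_sub_distrib, Finset.mul_sum]
    _ ≤ (1 / 2) * fnormSq (X - Y) + ∑ i, w i * s i := by
        rw [fnormSq_expand, hfX, hfY]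
        linarith [hVN]
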